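/- Let n ≥ 2, let a ∈ ℝ, and let C be the companion matrix of X^n − a (so C represents multiplication by the generator k of a principal algebra with k^n = a). Then for every j with 1 ≤ j ≤ n−1 and every θ ∈ ℝ, det(exp(θ • C^j)) = 1, where exp denotes the matrix exponential. (That is, F(e^{k^j θ}) = 1 for every power 1 ≤ j ≤ n−1 of the generator, in the algebras ℋ_n, 𝒞_n and Γ_n.) -/

import Mathlib

open NormedSpace

/-- The companion matrix of the monic real polynomial
`X^n + c_{n-1} X^{n-1} + ⋯ + c_1 X + c_0`: it has `1`s on the subdiagonal,
`-c i` in the last column, and `0` elsewhere. -/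
def companionMatrix (n : ℕ) (c : Fin n → ℝ) : Matrix (Fin n) (Fin n) ℝ :=
  fun i j =>
    (if (i : ℕ) = (j : ℕ) + 1 then (1 : ℝ) else 0) +
      (if (j : ℕ) = n - 1 then -c i else 0)

section Aux

open Matrix

/-- Key general lemma (Liouville's formula, special case): if a real square matrix has trace
zero, then the determinant of `exp (θ • x)` is `1` for every `θ`. -/
theorem det_exp_trace_zero {N : ℕ} (x : Matrix (Fin N) (Fin N) ℝ) (hx : x.trace = 0) (θ : ℝ) :
    (exp (θ • x)).det = 1 := by
  letI : SeminormedRing (Matrix (Fin N) (Fin N) ℝ) := Matrix.linftyOpSemiNormedRing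
  letI : NormedRing (Matrix (Fin N) (Fin N) ℝ) := Matrix.linftyOpNormedRing
  letI : NormedAlgebra ℝ (Matrix (Fin N) (Fin N) ℝ) := Matrix.linftyOpNormedAlgebra
  set f : ℝ → ℝ := fun u => (exp (u • x)).det with hf
  have key : ∀ t : ℝ, HasDerivAt f 0 t := by
    intro t
    set A : Matrix (Fin N) (Fin N) ℝ := exp (t • x) with hA
    have hE : HasDerivAt (fun u : ℝ => exp (u • x)) (A * x) t :=
      hasDerivAt_exp_smul_const x t
    have hEntry : ∀ p q : Fin N,
        HasDerivAt (fun u : ℝ => exp (u • x) p q) ((A * x) p q) t := by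
      intro p q
      let L : Matrix (Fin N) (Fin N) ℝ →ₗ[ℝ] ℝ :=
        { toFun := fun B => B p q
          map_add' := fun _ _ => rfl
          map_smul' := fun _ _ => rfl }
      have := L.toContinuousLinearMap.hasFDerivAt.comp_hasDerivAt t hE
      exact this
    have hσ : ∀ σ : Equiv.Perm (Fin N),
        HasDerivAt (fun u : ℝ => ∏ i, exp (u • x) (σ i) i)
          (∑ k, (∏ i ∈ Finset.univ.erase k, A (σ i) i) • (A * x) (σ k) k) t := by
      intro σ
      have := HasDerivAt.fun_finsetProd (u := Finset.univ)
        (f := fun (i : Fin N) (u : ℝ) => exp (u • x) (σ i) i)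
        (f' := fun i => (A * x) (σ i) i) (x := t) (fun i _ => hEntry (σ i) i)
      simpa using this
    have hdet : HasDerivAt f
        (∑ σ : Equiv.Perm (Fin N), ((Equiv.Perm.sign σ : ℤ) : ℝ) *
          ∑ k, (∏ i ∈ Finset.univ.erase k, A (σ i) i) • (A * x) (σ k) k) t := by
      have hfeq : f = fun u : ℝ => ∑ σ : Equiv.Perm (Fin N),
          ((Equiv.Perm.sign σ : ℤ) : ℝ) * ∏ i, exp (u • x) (σ i) i := by
        funext u
        rw [hf]
        exact Matrix.det_apply' _
      rw [hfeq]
      exact HasDerivAt.fun_sum fun σ _ => (hσ σ).const_mul _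
    -- the derivative equals `trace x * det A = 0`
    have hS : (∑ σ : Equiv.Perm (Fin N), ((Equiv.Perm.sign σ : ℤ) : ℝ) *
        ∑ k, (∏ i ∈ Finset.univ.erase k, A (σ i) i) • (A * x) (σ k) k) = 0 := by
      have step1 : (∑ σ : Equiv.Perm (Fin N), ((Equiv.Perm.sign σ : ℤ) : ℝ) *
          ∑ k, (∏ i ∈ Finset.univ.erase k, A (σ i) i) • (A * x) (σ k) k)
          = ∑ k : Fin N, ∑ σ : Equiv.Perm (Fin N), ((Equiv.Perm.sign σ : ℤ) : ℝ) *
            ((A * x) (σ k) k * ∏ i ∈ Finset.univ.erase k, A (σ i) i) := by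
        rw [Finset.sum_comm]
        refine Finset.sum_congr rfl fun σ _ => ?_
        rw [Finset.mul_sum]
        refine Finset.sum_congr rfl fun k _ => ?_
        rw [smul_eq_mul, mul_comm ((A * x) (σ k) k)]
      have step2 : ∀ k : Fin N,
          (∑ σ : Equiv.Perm (Fin N), ((Equiv.Perm.sign σ : ℤ) : ℝ) *
            ((A * x) (σ k) k * ∏ i ∈ Finset.univ.erase k, A (σ i) i))
          = (Matrix.updateCol A k (fun r => (A * x) r k)).det := by
        intro k
        rw [Matrix.det_apply']
        refine Finset.sum_congr rfl fun σ _ => ?_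
        congr 1
        rw [← Finset.mul_prod_erase Finset.univ
          (fun i => (Matrix.updateCol A k fun r => (A * x) r k) (σ i) i) (Finset.mem_univ k),
          Matrix.updateCol_self]
        congr 1
        exact (Finset.prod_congr rfl fun i hi =>
          Matrix.updateCol_ne (Finset.ne_of_mem_erase hi)).symm
      have step3 : ∀ k : Fin N,
          (Matrix.updateCol A k (fun r => (A * x) r k)).det = x k k * A.det := by
        intro k
        have hc : (fun r => (A * x) r k) = fun r => ∑ s, (fun s' => x s' k) s • A r s := by
          funext r
          simp [Matrix.mul_apply, mul_comm]
        rw [hc, Matrix.det_updateCol_sum A k (fun s' => x s' k), smul_eq_mul]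
      calc (∑ σ : Equiv.Perm (Fin N), ((Equiv.Perm.sign σ : ℤ) : ℝ) *
          ∑ k, (∏ i ∈ Finset.univ.erase k, A (σ i) i) • (A * x) (σ k) k)
          = ∑ k : Fin N, ∑ σ : Equiv.Perm (Fin N), ((Equiv.Perm.sign σ : ℤ) : ℝ) *
            ((A * x) (σ k) k * ∏ i ∈ Finset.univ.erase k, A (σ i) i) := step1
        _ = ∑ k : Fin N, (Matrix.updateCol A k (fun r => (A * x) r k)).det :=
            Finset.sum_congr rfl fun k _ => step2 k
        _ = ∑ k : Fin N, x k k * A.det := Finset.sum_congr rfl fun k _ => step3 k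
        _ = x.trace * A.det := by rw [← Finset.sum_mul]; rfl
        _ = 0 := by rw [hx, zero_mul]
    exact hS ▸ hdet
  have hconst : f θ = f 0 :=
    is_const_of_deriv_eq_zero (fun t => (key t).differentiableAt)
      (fun t => (key t).deriv) θ 0
  have h0 : f 0 = 1 := by
    rw [hf]
    simp [exp_zero]
  rw [hf] at hconst
  simpa [h0] using hconst

/-- Entries of the companion matrix of `Xⁿ − a`. -/
theorem companion_apply (n : ℕ) (a : ℝ) (i k : Fin n) :
    companionMatrix n (fun i => if (i : ℕ) = 0 then -a else 0) i k =
      (if (i : ℕ) = (k : ℕ) + 1 then 1 else 0) +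
        (if (k : ℕ) = n - 1 ∧ (i : ℕ) = 0 then a else 0) := by
  unfold companionMatrix
  by_cases h1 : (k : ℕ) = n - 1 <;> by_cases h2 : (i : ℕ) = 0 <;> simp [h1, h2]

/-- Entries of powers of the companion matrix of `Xⁿ − a`: `Cʲ` is a weighted cyclic
shift by `j`. -/
theorem companion_pow_apply (n : ℕ) (hn : 2 ≤ n) (a : ℝ) :
    ∀ j : ℕ, j ≤ n - 1 → ∀ i k : Fin n,
      ((companionMatrix n (fun i => if (i : ℕ) = 0 then -a else 0)) ^ j) i k =
        if (i : ℕ) = ((k : ℕ) + j) % n then (if (k : ℕ) + j < n then 1 else a) else 0 := by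
  intro j
  induction j with
  | zero =>
    intro _ i k
    simp [Matrix.one_apply, Nat.mod_eq_of_lt k.isLt, k.isLt, Fin.ext_iff]
  | succ j ih =>
    intro hj i k
    have hjn : j ≤ n - 1 := le_trans (Nat.le_succ j) hj
    have hK : (k : ℕ) < n := k.isLt
    have hI : (i : ℕ) < n := i.isLt
    rw [pow_succ', Matrix.mul_apply]
    have hm : ((k : ℕ) + j) % n < n := Nat.mod_lt _ (by omega)
    set m0 : Fin n := ⟨((k : ℕ) + j) % n, hm⟩ with hm0
    rw [Finset.sum_eq_single m0]
    · rw [ih hjn m0 k, companion_apply]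
      have hm0v : (m0 : ℕ) = ((k : ℕ) + j) % n := rfl
      rw [if_pos hm0v, show (k : ℕ) + (j + 1) = (k : ℕ) + j + 1 by omega]
      by_cases hlt : (k : ℕ) + j < n
      · have hmod : ((k : ℕ) + j) % n = (k : ℕ) + j := Nat.mod_eq_of_lt hlt
        by_cases hend : (k : ℕ) + j + 1 < n
        · have h1 : ((k : ℕ) + j + 1) % n = (k : ℕ) + j + 1 := Nat.mod_eq_of_lt hend
          have h2 : ¬ ((k : ℕ) + j = n - 1) := by omega
          simp [hm0v, hmod, h1, h2, hlt, hend]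
        · have he : (k : ℕ) + j = n - 1 := by omega
          have hmod1 : ((k : ℕ) + j + 1) % n = 0 := by
            rw [show (k : ℕ) + j + 1 = n by omega, Nat.mod_self]
          have hi1 : ¬ ((i : ℕ) = (k : ℕ) + j + 1) := by omega
          have hpos : 0 < n := by omega
          have hni : ¬ ((i : ℕ) = n - 1 + 1) := by omega
          have h3 : n - 1 + 1 = n := by omega
          simp [hm0v, hmod, he, hmod1, hlt, hi1, hend, hpos, hni, h3, Nat.mod_self, Nat.lt_irrefl]
          omega
      · have hj2 : j ≤ n - 2 := by omega
        have hmod : ((k : ℕ) + j) % n = (k : ℕ) + j - n := by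
          rw [Nat.mod_eq_sub_mod (by omega), Nat.mod_eq_of_lt (by omega)]
        have hm1 : ¬ ((k : ℕ) + j - n = n - 1) := by omega
        have hmod1 : ((k : ℕ) + j + 1) % n = (k : ℕ) + j + 1 - n := by
          rw [Nat.mod_eq_sub_mod (by omega), Nat.mod_eq_of_lt (by omega)]
        have hend : ¬ ((k : ℕ) + j + 1 < n) := by omega
        have harith : (k : ℕ) + j - n + 1 = (k : ℕ) + j + 1 - n := by omega
        simp [hm0v, hmod, hmod1, hlt, hend, hm1, harith, ite_mul]
    · intro b _ hb
      rw [ih hjn b k, if_neg, mul_zero]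
      intro hbv
      exact hb (Fin.ext hbv)
    · intro h
      exact absurd (Finset.mem_univ m0) h

/-- The powers `Cʲ`, `1 ≤ j ≤ n − 1`, of the companion matrix of `Xⁿ − a` are traceless. -/
theorem companion_pow_trace (n : ℕ) (hn : 2 ≤ n) (a : ℝ) (j : ℕ) (hj1 : 1 ≤ j)
    (hj2 : j ≤ n - 1) :
    ((companionMatrix n (fun i => if (i : ℕ) = 0 then -a else 0)) ^ j).trace = 0 := by
  rw [Matrix.trace]
  refine Finset.sum_eq_zero fun i _ => ?_
  rw [Matrix.diag_apply, companion_pow_apply n hn a j hj2 i i, if_neg]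
  have hI : (i : ℕ) < n := i.isLt
  by_cases h : (i : ℕ) + j < n
  · rw [Nat.mod_eq_of_lt h]; omega
  · rw [Nat.mod_eq_sub_mod (by omega), Nat.mod_eq_of_lt (by omega)]; omega

end Aux

/-- Let `C` be the companion matrix of `Xⁿ − a` (multiplication by the generator `k` of a
principal algebra with `kⁿ = a`, covering `ℋ_n`, `𝒞_n` and `Γ_n`).  Then for every power
`1 ≤ j ≤ n−1` of the generator and every `θ ∈ ℝ`, `F(e^{kʲθ}) = det (exp (θ • Cʲ)) = 1`. -/
theorem det_exp_smul_pow_companion (n : ℕ) (hn : 2 ≤ n) (a : ℝ) :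
    ∀ j : ℕ, 1 ≤ j → j ≤ n - 1 → ∀ θ : ℝ,
      (exp (θ • companionMatrix n (fun i => if (i : ℕ) = 0 then -a else 0) ^ j)).det = 1 := by
  intro j hj1 hj2 θ
  exact det_exp_trace_zero _ (companion_pow_trace n hn a j hj1 hj2) θ
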